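/- If E_i ⊆ [0,1] is α-winning for each i = 1, 2, 3, …, then the countable intersection ⋂_{i=1}^∞ E_i is also α-winning. -/
import Mathlib


open Set MeasureTheory Filter Topology

noncomputable section

/-- The β-transformation `x ↦ βx mod 1`. -/
def fbeta (β : ℝ) (x : ℝ) : ℝ := Int.fract (β * x)

/-- The digit sequence `d(x, β)`, given by `d(x,β)_n = [β f_β^n(x)]`. -/
def bdigit (β x : ℝ) (n : ℕ) : ℕ := (⌊β * (fbeta β)^[n] x⌋).toNat

/-- The β-shift `S_β`: the closure (product topology) of the set of digit sequences of
points of `[0,1)`. -/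
def betaShift (β : ℝ) : Set (ℕ → ℕ) :=
  closure {d | ∃ x ∈ Set.Ico (0 : ℝ) 1, d = bdigit β x}

/-- `π_β ((i_k)) = ∑ i_k β^{-(k+1)}`. -/
def piBeta (β : ℝ) (d : ℕ → ℕ) : ℝ := ∑' k : ℕ, (d k : ℝ) / β ^ (k + 1)

/-- The finite word `w` occurs in the sequence `d` at position `m`. -/
def occursAt (w : List ℕ) (d : ℕ → ℕ) (m : ℕ) : Prop :=
  ∀ i < w.length, d (m + i) = w.getD i 0

/-- The finite word `w` occurs somewhere in the sequence `d`. -/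
def occursIn (w : List ℕ) (d : ℕ → ℕ) : Prop := ∃ m, occursAt w d m

/-- `w ∈ S_β^*`: the finite word `w` occurs in some sequence of `S_β`. -/
def wordIn (β : ℝ) (w : List ℕ) : Prop := ∃ d ∈ betaShift β, occursIn w d

/-- The finite word `w` occurs in some sequence of the set `S`. -/
def wordInSet (S : Set (ℕ → ℕ)) (w : List ℕ) : Prop := ∃ d ∈ S, occursIn w d

/-- The cylinder `[w]` in `S_β`. -/
def cylinder (β : ℝ) (w : List ℕ) : Set (ℕ → ℕ) :=
  {d ∈ betaShift β | ∀ i < w.length, d i = w.getD i 0}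

/-- A subshift of finite type inside `S_β`: the subset of `S_β` determined by a finite
set of forbidden words. -/
def IsSFTin (β : ℝ) (S : Set (ℕ → ℕ)) : Prop :=
  ∃ F : Finset (List ℕ), S = {d ∈ betaShift β | ∀ w ∈ F, ¬ occursIn w d}

/-- `S_β` is a subshift of finite type iff `d(1,β)` has only finitely many nonzero digits. -/
def betaShiftFiniteType (β : ℝ) : Prop := ∃ N, ∀ n ≥ N, bdigit β 1 n = 0

/-- The length (Lebesgue measure) of a set of reals. -/
def len (I : Set ℝ) : ℝ := (volume I).toReal

/-- `I` is a (possibly degenerate) closed interval. -/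
def IsClosedInterval (I : Set ℝ) : Prop := ∃ a b : ℝ, a ≤ b ∧ I = Set.Icc a b

/-- A legal move in Schmidt's game with ratio `ρ`: a closed subinterval `cur` of `prev`
with `|cur| ≥ ρ|prev|`. -/
def MoveLegal (ρ : ℝ) (prev cur : Set ℝ) : Prop :=
  IsClosedInterval cur ∧ cur ⊆ prev ∧ ρ * len prev ≤ len cur

/-- White has a winning strategy in Schmidt's `(α,γ)`-game on `[0,1]` with target set `E`:
there is a strategy (a function from the history of Black's moves to White's next move)
such that, for every sequence of moves of Black starting with a closed interval
`B 0 ⊆ [0,1]`, White's moves are legal as long as Black's have been, and if Black always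
moves legally then `⋂ k, W k ⊆ E`. -/
def WinsSchmidt (α γ : ℝ) (E : Set ℝ) : Prop :=
  ∃ strat : List (Set ℝ) → Set ℝ,
    ∀ B : ℕ → Set ℝ,
      (IsClosedInterval (B 0) ∧ B 0 ⊆ Set.Icc (0 : ℝ) 1) →
      (∀ n : ℕ,
        (∀ k < n, MoveLegal γ (strat (List.ofFn fun i : Fin (k + 1) => B i)) (B (k + 1))) →
        MoveLegal α (B n) (strat (List.ofFn fun i : Fin (n + 1) => B i))) ∧
      ((∀ k : ℕ, MoveLegal γ (strat (List.ofFn fun i : Fin (k + 1) => B i)) (B (k + 1))) →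
        (⋂ k : ℕ, strat (List.ofFn fun i : Fin (k + 1) => B i)) ⊆ E)

/-- `E` is `α`-winning: it is `(α,γ)`-winning for every `γ ∈ (0,1)`. -/
def AlphaWinning (α : ℝ) (E : Set ℝ) : Prop :=
  ∀ γ ∈ Set.Ioo (0 : ℝ) 1, WinsSchmidt α γ E

/-- A similarity transformation of `ℝ`. -/
def IsSimilarityMap (f : ℝ → ℝ) : Prop := ∃ a b : ℝ, a ≠ 0 ∧ ∀ x, f x = a * x + b

/-- Falconer's class `𝒢^s`: `G_δ` sets `F` with `dim_H (⋂ i, f_i(F)) ≥ s` for every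
sequence of similarity transformations `(f_i)`. -/
def FalconerClass (s : ℝ) (F : Set ℝ) : Prop :=
  IsGδ F ∧ ∀ f : ℕ → ℝ → ℝ, (∀ i, IsSimilarityMap (f i)) →
    ENNReal.ofReal s ≤ dimH (⋂ i, f i '' F)

/-- The suffix of `u` of length `m+1` coincides with the first `m+1` digits of `d(1,β)`. -/
def tailMatch (β : ℝ) (u : List ℕ) (m : ℕ) : Prop :=
  m < u.length ∧ ∀ t ≤ m, u.getD (u.length - 1 - m + t) 0 = bdigit β 1 t
/-! ### Auxiliary machinery for Statement 5 -/

/-- Scheduling: game `i` plays at steps `2^i*(2k+1) - 1`. -/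
def Tstep (i k : ℕ) : ℕ := 2^i * (2*k+1) - 1

/-- The game to which step `n` belongs. -/
def Gidx (n : ℕ) : ℕ := padicValNat 2 (n+1)

/-- The round index of step `n` within its game. -/
def Ridx (n : ℕ) : ℕ := (n+1) / 2^(Gidx n + 1)

lemma Tstep_add_one (i k : ℕ) : Tstep i k + 1 = 2^i * (2*k+1) := by
  have h1 : 1 ≤ 2^i := Nat.one_le_two_pow
  have h2 : 2^i ≤ 2^i * (2*k+1) := Nat.le_mul_of_pos_right _ (by omega)
  unfold Tstep; omega

lemma Tstep_succ (i k : ℕ) : Tstep i (k+1) = Tstep i k + 2^(i+1) := by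
  have h1 := Tstep_add_one i k
  have h2 := Tstep_add_one i (k+1)
  have h3 : 2^(i+1) = 2^i * 2 := pow_succ 2 i
  have e : 2^i * (2*(k+1)+1) = 2^i*(2*k+1) + 2^i*2 := by ring
  omega

lemma Gidx_Tstep (i k : ℕ) : Gidx (Tstep i k) = i := by
  unfold Gidx
  rw [Tstep_add_one]
  rw [padicValNat.mul (by positivity) (by omega), padicValNat.prime_pow]
  have : padicValNat 2 (2*k+1) = 0 := padicValNat.eq_zero_of_not_dvd (by omega)
  omega

lemma Ridx_Tstep (i k : ℕ) : Ridx (Tstep i k) = k := by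
  unfold Ridx
  rw [Gidx_Tstep, Tstep_add_one]
  have e : 2^i * (2*k+1) = 2^(i+1)*k + 2^i := by rw [pow_succ]; ring
  have h1 : 1 ≤ 2^i := Nat.one_le_two_pow
  rw [e, Nat.mul_add_div (by positivity), Nat.div_eq_of_lt (by rw [pow_succ]; omega)]
  omega

lemma Tstep_Gidx_Ridx (n : ℕ) : Tstep (Gidx n) (Ridx n) = n := by
  set v := Gidx n with hv
  have hd : 2^v ∣ n+1 := pow_padicValNat_dvd
  set m := (n+1)/2^v with hm
  have hmul : 2^v * m = n+1 := Nat.mul_div_cancel' hd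
  have hodd : ¬ 2 ∣ m := by
    have := Nat.not_dvd_ordCompl (p := 2) (n := n+1) Nat.prime_two (by omega)
    simpa [Nat.factorization_def _ Nat.prime_two, hm, hv, Gidx] using this
  have hm2 : m % 2 = 1 := by omega
  have hR : Ridx n = m / 2 := by
    rw [Ridx, ← hv, pow_succ, ← Nat.div_div_eq_div_mul, ← hm]
  rw [hR, Tstep]
  have h2 : 2 * (m/2) + 1 = m := by omega
  rw [h2]; omega

lemma Tstep_mono (i : ℕ) : StrictMono (Tstep i) :=
  strictMono_nat_of_lt_succ fun k => by
    rw [Tstep_succ]; have : 1 ≤ 2^(i+1) := Nat.one_le_two_pow; omega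

lemma aux_chain {α γ : ℝ} (hα : 0 < α) (hγ : 0 < γ) (B W : ℕ → Set ℝ) (N a : ℕ)
    (hB : ∀ k < N, MoveLegal γ (W k) (B (k+1)))
    (hW : ∀ m < N, MoveLegal α (B m) (W m)) :
    ∀ j, a + j < N → (IsClosedInterval (B (a+j+1)) ∧ B (a+j+1) ⊆ W a ∧
      γ * (α*γ)^j * len (W a) ≤ len (B (a+j+1))) := by
  intro j
  induction j with
  | zero =>
    intro hj
    obtain ⟨h1, h2, h3⟩ := hB a (by omega)
    exact ⟨h1, h2, by simpa using h3⟩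
  | succ j ih =>
    intro hj
    obtain ⟨c1, c2, c3⟩ := ih (by omega)
    obtain ⟨w1, w2, w3⟩ := hW (a+j+1) (by omega)
    obtain ⟨b1, b2, b3⟩ := hB (a+j+1) (by omega)
    refine ⟨b1, b2.trans (w2.trans c2), ?_⟩
    have hα' : 0 ≤ γ * α := by positivity
    calc γ * (α*γ)^(j+1) * len (W a) = γ * α * (γ * (α*γ)^j * len (W a)) := by ring
      _ ≤ γ * α * len (B (a+j+1)) := mul_le_mul_of_nonneg_left c3 hα'
      _ = γ * (α * len (B (a+j+1))) := by ring
      _ ≤ γ * len (W (a+j+1)) := mul_le_mul_of_nonneg_left w3 hγ.le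
      _ ≤ len (B (a+j+2)) := b3

lemma aux_nested {α γ : ℝ} (B W : ℕ → Set ℝ) (N : ℕ)
    (hB : ∀ k < N, MoveLegal γ (W k) (B (k+1)))
    (hW : ∀ m < N, MoveLegal α (B m) (W m)) :
    ∀ m ≤ N, B m ⊆ B 0 := by
  intro m
  induction m with
  | zero => intro _; exact subset_rfl
  | succ m ih =>
    intro hm
    exact ((hB m (by omega)).2.1.trans (hW m (by omega)).2.1).trans (ih (by omega))

lemma aux_closed {α γ : ℝ} (B W : ℕ → Set ℝ)
    (hB0i : IsClosedInterval (B 0)) (hB0s : B 0 ⊆ Set.Icc (0:ℝ) 1) (N : ℕ)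
    (hB : ∀ k < N, MoveLegal γ (W k) (B (k+1)))
    (hW : ∀ m < N, MoveLegal α (B m) (W m)) :
    ∀ m ≤ N, IsClosedInterval (B m) ∧ B m ⊆ Set.Icc (0:ℝ) 1 := by
  intro m hm
  refine ⟨?_, (aux_nested B W N hB hW m hm).trans hB0s⟩
  match m with
  | 0 => exact hB0i
  | m+1 => exact (hB m (by omega)).1

lemma aux_main {α γ : ℝ} (hα : 0 < α) (hγ0 : 0 < γ)
    (E : ℕ → Set ℝ)
    (strats : ℕ → List (Set ℝ) → Set ℝ)
    (hstrats : ∀ i, ∀ B : ℕ → Set ℝ,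
      (IsClosedInterval (B 0) ∧ B 0 ⊆ Set.Icc (0:ℝ) 1) →
      (∀ n : ℕ,
        (∀ k < n, MoveLegal (γ*(α*γ)^(2^(i+1)-1))
          (strats i (List.ofFn fun j : Fin (k+1) => B j)) (B (k+1))) →
        MoveLegal α (B n) (strats i (List.ofFn fun j : Fin (n+1) => B j))) ∧
      ((∀ k : ℕ, MoveLegal (γ*(α*γ)^(2^(i+1)-1))
          (strats i (List.ofFn fun j : Fin (k+1) => B j)) (B (k+1))) →
        (⋂ k : ℕ, strats i (List.ofFn fun j : Fin (k+1) => B j)) ⊆ E i))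
    (B : ℕ → Set ℝ) (hB0i : IsClosedInterval (B 0)) (hB0s : B 0 ⊆ Set.Icc (0:ℝ) 1)
    (W : ℕ → Set ℝ)
    (key : ∀ n, W n = strats (Gidx n)
      (List.ofFn fun j : Fin (Ridx n + 1) => B (Tstep (Gidx n) j))) :
    (∀ n : ℕ, (∀ k < n, MoveLegal γ (W k) (B (k+1))) → MoveLegal α (B n) (W n)) ∧
    ((∀ k : ℕ, MoveLegal γ (W k) (B (k+1))) → (⋂ k : ℕ, W k) ⊆ ⋂ i, E i) := by
  have keyT : ∀ i k, W (Tstep i k) =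
      strats i (List.ofFn fun j : Fin (k+1) => B (Tstep i j)) := by
    intro i k
    rw [key (Tstep i k), Gidx_Tstep, Ridx_Tstep]
  have main1 : ∀ n : ℕ, (∀ k < n, MoveLegal γ (W k) (B (k+1))) → MoveLegal α (B n) (W n) := by
    intro n
    induction n using Nat.strong_induction_on with
    | _ n IH =>
      intro hBl
      have hWl : ∀ m < n, MoveLegal α (B m) (W m) := fun m hm =>
        IH m hm (fun k hk => hBl k (by omega))
      set i := Gidx n with hi
      set k := Ridx n with hk
      have hTik : Tstep i k = n := Tstep_Gidx_Ridx n
      have hT0 : Tstep i 0 ≤ n := hTik ▸ (Tstep_mono i).monotone (Nat.zero_le k)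
      have hsub0 := aux_closed B W hB0i hB0s n hBl hWl (Tstep i 0) hT0
      obtain ⟨Hleg, _⟩ := hstrats i (fun k' => B (Tstep i k')) hsub0
      have hsubleg : ∀ k' < k, MoveLegal (γ*(α*γ)^(2^(i+1)-1))
          (strats i (List.ofFn fun j : Fin (k'+1) => B (Tstep i j)))
          (B (Tstep i (k'+1))) := by
        intro k' hk'
        rw [← keyT i k']
        have h2p : (1:ℕ) ≤ 2^(i+1) := Nat.one_le_two_pow
        have hstep : Tstep i (k'+1) = Tstep i k' + (2^(i+1)-1) + 1 := by
          have := Tstep_succ i k'; omega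
        have hle : Tstep i (k'+1) ≤ n := hTik ▸ (Tstep_mono i).monotone (by omega)
        have hlt : Tstep i k' + (2^(i+1)-1) < n := by omega
        obtain ⟨c1, c2, c3⟩ := aux_chain hα hγ0 B W n (Tstep i k') hBl hWl (2^(i+1)-1) hlt
        rw [hstep]
        exact ⟨c1, c2, c3⟩
      have := Hleg k hsubleg
      rw [← hTik, keyT i k]
      exact this
  refine ⟨main1, ?_⟩
  intro hBl
  have hWl : ∀ m, MoveLegal α (B m) (W m) := fun m => main1 m (fun k _ => hBl k)
  intro x hx
  rw [Set.mem_iInter]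
  intro i
  have hsub0 := aux_closed B W hB0i hB0s (Tstep i 0)
    (fun k _ => hBl k) (fun m _ => hWl m) (Tstep i 0) le_rfl
  obtain ⟨_, Hwin⟩ := hstrats i (fun k' => B (Tstep i k')) hsub0
  have hsubleg : ∀ k', MoveLegal (γ*(α*γ)^(2^(i+1)-1))
      (strats i (List.ofFn fun j : Fin (k'+1) => B (Tstep i j)))
      (B (Tstep i (k'+1))) := by
    intro k'
    rw [← keyT i k']
    have h2p : (1:ℕ) ≤ 2^(i+1) := Nat.one_le_two_pow
    have hstep : Tstep i (k'+1) = Tstep i k' + (2^(i+1)-1) + 1 := by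
      have := Tstep_succ i k'; omega
    set N := Tstep i k' + (2^(i+1)-1) + 1 with hN
    obtain ⟨c1, c2, c3⟩ := aux_chain hα hγ0 B W N (Tstep i k')
      (fun k _ => hBl k) (fun m _ => hWl m) (2^(i+1)-1) (by omega)
    rw [hstep]
    exact ⟨c1, c2, c3⟩
  refine Hwin hsubleg ?_
  rw [Set.mem_iInter]
  intro k
  rw [← keyT i k]
  exact Set.mem_iInter.1 hx (Tstep i k)

/-- a countable intersection of `α`-winning subsets of `[0,1]` is
`α`-winning. -/
theorem winning_countable_inter (α : ℝ) (hα : 0 < α) (hα1 : α < 1)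
    (E : ℕ → Set ℝ) (hE : ∀ i, E i ⊆ Set.Icc (0 : ℝ) 1)
    (h : ∀ i, AlphaWinning α (E i)) : AlphaWinning α (⋂ i, E i) := by
  intro γ hγ
  obtain ⟨hγ0, hγ1⟩ := hγ
  have hαγ : 0 < α * γ := mul_pos hα hγ0
  have hαγ1 : α * γ < 1 := by nlinarith
  have hγi : ∀ i : ℕ, γ * (α*γ)^(2^(i+1)-1) ∈ Set.Ioo (0:ℝ) 1 := fun i =>
    ⟨by positivity, by
      have h1 : (α*γ)^(2^(i+1)-1) ≤ 1 := pow_le_one₀ hαγ.le hαγ1.le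
      nlinarith⟩
  have hw := fun i => h i (γ * (α*γ)^(2^(i+1)-1)) (hγi i)
  unfold WinsSchmidt at hw
  choose strats hstrats using hw
  unfold WinsSchmidt
  refine ⟨fun l => (fun m : ℕ => strats (Gidx m)
    (List.ofFn fun j : Fin (Ridx m + 1) => l.getD (Tstep (Gidx m) (j:ℕ)) ∅)) (l.length - 1), ?_⟩
  rintro B ⟨hB0i, hB0s⟩
  have key : ∀ n : ℕ, (fun m : ℕ => strats (Gidx m)
      (List.ofFn fun j : Fin (Ridx m + 1) =>
        (List.ofFn fun i : Fin (n+1) => B (i:ℕ)).getD (Tstep (Gidx m) (j:ℕ)) ∅))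
      ((List.ofFn fun i : Fin (n+1) => B (i:ℕ)).length - 1)
      = strats (Gidx n) (List.ofFn fun j : Fin (Ridx n + 1) => B (Tstep (Gidx n) (j:ℕ))) := by
    intro n
    rw [show (List.ofFn fun i : Fin (n+1) => B (i:ℕ)).length - 1 = n by simp]
    show strats (Gidx n) _ = _
    refine congrArg _ (congrArg List.ofFn (funext fun j => ?_))
    have hjle : (j:ℕ) ≤ Ridx n := Nat.lt_succ_iff.mp j.isLt
    have hTj : Tstep (Gidx n) (j:ℕ) ≤ n := by
      have h1 := (Tstep_mono (Gidx n)).monotone hjle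
      exact le_trans h1 (le_of_eq (Tstep_Gidx_Ridx n))
    have hlt : Tstep (Gidx n) (j:ℕ) < (List.ofFn fun i : Fin (n+1) => B (i:ℕ)).length := by
      simpa using by omega
    rw [List.getD_eq_getElem _ _ hlt, List.getElem_ofFn]
  have H := aux_main hα hγ0 E strats hstrats B hB0i hB0s
    (fun n => (fun m : ℕ => strats (Gidx m)
      (List.ofFn fun j : Fin (Ridx m + 1) =>
        (List.ofFn fun i : Fin (n+1) => B (i:ℕ)).getD (Tstep (Gidx m) (j:ℕ)) ∅))
      ((List.ofFn fun i : Fin (n+1) => B (i:ℕ)).length - 1))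
    key
  exact H
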